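/- Let n ≥ 1. For g ∈ GL(n+1, ℂ) written in blocks g = (A b; c d) with A an n×n complex matrix, b ∈ ℂⁿ a column, c a row vector of length n, and d ∈ ℂ, and for z ∈ ℂⁿ with c·z + d ≠ 0, set y(g,z) := (c·z + d)⁻¹ c (a row vector of length n), and define the (n+1)×(n+1) matrices Y(g,z) := fromBlocks 0 0 (y(g,z)) 0 and, for x ∈ ℂⁿ, X := fromBlocks 0 x 0 0. Then the map z ↦ y(g,z) is holomorphic on { z | c·z + d ≠ 0 } and its derivative at z in the direction x equals −(y(g,z)·x) • y(g,z); equivalently, the derivative of z ↦ Y(g,z) at z in the direction x equals (1/2) ⁅Y(g,z), ⁅Y(g,z), X⁆⁆, where ⁅·,·⁆ denotes the matrix commutator. -/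

import Mathlib

open Matrix

noncomputable section

/-- The upper-left `n × n` block `A` of an `(n+1) × (n+1)` matrix `g = (A b; c d)`. -/
def Ablk {n : ℕ} (g : Matrix (Fin n ⊕ Unit) (Fin n ⊕ Unit) ℂ) : Matrix (Fin n) (Fin n) ℂ :=
  g.toBlocks₁₁

/-- The upper-right column `b` of `g = (A b; c d)`. -/
def bcol {n : ℕ} (g : Matrix (Fin n ⊕ Unit) (Fin n ⊕ Unit) ℂ) : Fin n → ℂ :=
  fun i => g (Sum.inl i) (Sum.inr ())

/-- The lower-left row `c` of `g = (A b; c d)`. -/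
def crow {n : ℕ} (g : Matrix (Fin n ⊕ Unit) (Fin n ⊕ Unit) ℂ) : Fin n → ℂ :=
  fun j => g (Sum.inr ()) (Sum.inl j)

/-- The lower-right scalar `d` of `g = (A b; c d)`. -/
def dent {n : ℕ} (g : Matrix (Fin n ⊕ Unit) (Fin n ⊕ Unit) ℂ) : ℂ :=
  g (Sum.inr ()) (Sum.inr ())

/-- The denominator `c·z + d` of the Möbius action of `g = (A b; c d)` at `z ∈ ℂⁿ`. -/
def den {n : ℕ} (g : Matrix (Fin n ⊕ Unit) (Fin n ⊕ Unit) ℂ) (z : Fin n → ℂ) : ℂ :=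
  crow g ⬝ᵥ z + dent g

/-- The Möbius action `g·z = (c·z + d)⁻¹ (A z + b)` of `g = (A b; c d)` on `z ∈ ℂⁿ`. -/
noncomputable def mact {n : ℕ} (g : Matrix (Fin n ⊕ Unit) (Fin n ⊕ Unit) ℂ)
    (z : Fin n → ℂ) : Fin n → ℂ :=
  (den g z)⁻¹ • (Ablk g *ᵥ z + bcol g)

/-- A vector `v ∈ ℂⁿ` as an `n × 1` column matrix. -/
def colm {n : ℕ} (v : Fin n → ℂ) : Matrix (Fin n) Unit ℂ := Matrix.of fun i _ => v i

/-- A vector `v ∈ ℂⁿ` as a `1 × n` row matrix. -/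
def rowm {n : ℕ} (v : Fin n → ℂ) : Matrix Unit (Fin n) ℂ := Matrix.of fun _ j => v j

/-- A scalar `a ∈ ℂ` as a `1 × 1` matrix. -/
def sclm (a : ℂ) : Matrix Unit Unit ℂ := Matrix.of fun _ _ => a

attribute [local instance] Matrix.normedAddCommGroup Matrix.normedSpace

/-- The row vector `y(g,z) = (c·z + d)⁻¹ c`. -/
def yrow {n : ℕ} (g : Matrix (Fin n ⊕ Unit) (Fin n ⊕ Unit) ℂ) (z : Fin n → ℂ) :
    Fin n → ℂ :=
  (den g z)⁻¹ • crow g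

/-- The strictly lower triangular matrix `Y(g,z) = (0 0; y(g,z) 0)`. -/
def Ymat {n : ℕ} (g : Matrix (Fin n ⊕ Unit) (Fin n ⊕ Unit) ℂ) (z : Fin n → ℂ) :
    Matrix (Fin n ⊕ Unit) (Fin n ⊕ Unit) ℂ :=
  fromBlocks 0 0 (rowm (yrow g z)) 0

/-- The strictly upper triangular matrix `X = (0 x; 0 0)` for `x ∈ ℂⁿ`. -/
def Xmat {n : ℕ} (x : Fin n → ℂ) : Matrix (Fin n ⊕ Unit) (Fin n ⊕ Unit) ℂ :=
  fromBlocks 0 (colm x) 0 0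

/-- Dot product with a fixed row `c`, as a continuous linear map. -/
def dotCLM {n : ℕ} (c : Fin n → ℂ) : (Fin n → ℂ) →L[ℂ] ℂ :=
  LinearMap.toContinuousLinearMap
    { toFun := fun v => c ⬝ᵥ v
      map_add' := fun u v => by simp [dotProduct_add]
      map_smul' := fun a v => by simp }

@[simp] lemma dotCLM_apply {n : ℕ} (c v : Fin n → ℂ) : dotCLM c v = c ⬝ᵥ v := rfl

/-- Embedding of a row vector into the lower-left block as a continuous linear map. -/
def embCLM {n : ℕ} : (Fin n → ℂ) →L[ℂ] Matrix (Fin n ⊕ Unit) (Fin n ⊕ Unit) ℂ :=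
  LinearMap.toContinuousLinearMap
    { toFun := fun v => fromBlocks 0 0 (rowm v) 0
      map_add' := fun u v => by
        ext (i | i) (j | j) <;> simp [fromBlocks, rowm]
      map_smul' := fun a v => by
        ext (i | i) (j | j) <;> simp [fromBlocks, rowm] }

@[simp] lemma embCLM_apply {n : ℕ} (v : Fin n → ℂ) :
    embCLM v = fromBlocks 0 0 (rowm v) 0 := rfl

lemma hasFDerivAt_den {n : ℕ} (g : Matrix (Fin n ⊕ Unit) (Fin n ⊕ Unit) ℂ)
    (z : Fin n → ℂ) : HasFDerivAt (den g) (dotCLM (crow g)) z := by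
  exact (dotCLM (crow g)).hasFDerivAt.add_const (dent g)

lemma hasFDerivAt_yrow {n : ℕ} (g : Matrix (Fin n ⊕ Unit) (Fin n ⊕ Unit) ℂ)
    (z : Fin n → ℂ) (hz : den g z ≠ 0) :
    HasFDerivAt (yrow g)
      (((-(den g z ^ 2)⁻¹) • dotCLM (crow g)).smulRight (crow g)) z := by
  have h1 : HasFDerivAt (fun w => (den g w)⁻¹)
      ((-(den g z ^ 2)⁻¹) • dotCLM (crow g)) z := by
    have h := (hasDerivAt_inv hz).comp_hasFDerivAt z (hasFDerivAt_den g z)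
    exact h
  simpa [yrow] using h1.smul_const (crow g)

lemma yrow_deriv_eq {n : ℕ} (g : Matrix (Fin n ⊕ Unit) (Fin n ⊕ Unit) ℂ)
    (z : Fin n → ℂ) (hz : den g z ≠ 0) (x : Fin n → ℂ) :
    (((-(den g z ^ 2)⁻¹) • dotCLM (crow g)).smulRight (crow g)) x
      = -(yrow g z ⬝ᵥ x) • yrow g z := by
  have : yrow g z ⬝ᵥ x = (den g z)⁻¹ * (crow g ⬝ᵥ x) := by
    simp [yrow, smul_dotProduct, smul_eq_mul]
  rw [this]
  simp only [ContinuousLinearMap.smulRight_apply, ContinuousLinearMap.smul_apply,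
    dotCLM_apply, yrow, smul_smul, smul_eq_mul]
  congr 1
  rw [pow_two, mul_inv]
  ring

lemma rowm_mul_colm {n : ℕ} (y x : Fin n → ℂ) : rowm y * colm x = sclm (y ⬝ᵥ x) := by
  ext i j
  simp [rowm, colm, sclm, Matrix.mul_apply, dotProduct]

lemma sclm_mul_rowm {n : ℕ} (a : ℂ) (v : Fin n → ℂ) :
    sclm a * rowm v = rowm (a • v) := by
  ext i j
  simp [rowm, sclm, Matrix.mul_apply]

lemma half_bracket {n : ℕ} (y x : Fin n → ℂ) :
    (1 / 2 : ℂ) • ⁅(fromBlocks 0 0 (rowm y) 0 : Matrix (Fin n ⊕ Unit) (Fin n ⊕ Unit) ℂ),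
        ⁅(fromBlocks 0 0 (rowm y) 0 : Matrix (Fin n ⊕ Unit) (Fin n ⊕ Unit) ℂ),
          fromBlocks 0 (colm x) 0 0⁆⁆
      = fromBlocks 0 0 (rowm (-(y ⬝ᵥ x) • y)) 0 := by
  simp only [Ring.lie_def, Matrix.fromBlocks_multiply, Matrix.mul_sub, Matrix.sub_mul,
    Matrix.mul_zero, Matrix.zero_mul, add_zero, zero_add, sub_zero, zero_sub]
  rw [rowm_mul_colm]
  rw [show rowm y * (colm x * rowm y) = rowm ((y ⬝ᵥ x) • y) from by
    rw [← Matrix.mul_assoc, rowm_mul_colm, sclm_mul_rowm], sclm_mul_rowm]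
  ext (i | i) (j | j) <;>
    simp [fromBlocks, rowm, smul_eq_mul] <;> ring

/-- `z ↦ y(g,z)` is holomorphic on `{z | c·z + d ≠ 0}` and its derivative at `z` in
direction `x` is `-(y(g,z)·x) • y(g,z)`; equivalently, the derivative of `z ↦ Y(g,z)`
in direction `x` is `½ ⁅Y(g,z), ⁅Y(g,z), X⁆⁆`. -/
theorem yrow_hasFDerivAt (n : ℕ) (hn : 1 ≤ n) (g : GL (Fin n ⊕ Unit) ℂ) :
    DifferentiableOn ℂ (yrow (g : Matrix (Fin n ⊕ Unit) (Fin n ⊕ Unit) ℂ))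
        {z : Fin n → ℂ | den (g : Matrix (Fin n ⊕ Unit) (Fin n ⊕ Unit) ℂ) z ≠ 0} ∧
      (∀ z : Fin n → ℂ, den (g : Matrix (Fin n ⊕ Unit) (Fin n ⊕ Unit) ℂ) z ≠ 0 →
        (∃ L : (Fin n → ℂ) →L[ℂ] (Fin n → ℂ),
          HasFDerivAt (yrow (g : Matrix (Fin n ⊕ Unit) (Fin n ⊕ Unit) ℂ)) L z ∧
            ∀ x : Fin n → ℂ,
              L x = -((yrow (g : Matrix (Fin n ⊕ Unit) (Fin n ⊕ Unit) ℂ) z ⬝ᵥ x)) •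
                  yrow (g : Matrix (Fin n ⊕ Unit) (Fin n ⊕ Unit) ℂ) z) ∧
        (∃ M : (Fin n → ℂ) →L[ℂ] Matrix (Fin n ⊕ Unit) (Fin n ⊕ Unit) ℂ,
          HasFDerivAt (Ymat (g : Matrix (Fin n ⊕ Unit) (Fin n ⊕ Unit) ℂ)) M z ∧
            ∀ x : Fin n → ℂ,
              M x = (1 / 2 : ℂ) •
                  ⁅Ymat (g : Matrix (Fin n ⊕ Unit) (Fin n ⊕ Unit) ℂ) z,
                    ⁅Ymat (g : Matrix (Fin n ⊕ Unit) (Fin n ⊕ Unit) ℂ) z, Xmat x⁆⁆)) := by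
  set G : Matrix (Fin n ⊕ Unit) (Fin n ⊕ Unit) ℂ := (g : Matrix (Fin n ⊕ Unit) (Fin n ⊕ Unit) ℂ)
  refine ⟨fun z hz => ((hasFDerivAt_yrow G z hz).differentiableAt).differentiableWithinAt,
    fun z hz => ?_⟩
  refine ⟨⟨_, hasFDerivAt_yrow G z hz, fun x => yrow_deriv_eq G z hz x⟩, ?_⟩
  refine ⟨embCLM.comp (((-(den G z ^ 2)⁻¹) • dotCLM (crow G)).smulRight (crow G)), ?_, ?_⟩
  · have : Ymat G = fun w => embCLM (yrow G w) := by
      funext w; simp [Ymat]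
    rw [this]
    exact embCLM.hasFDerivAt.comp z (hasFDerivAt_yrow G z hz)
  · intro x
    rw [ContinuousLinearMap.comp_apply, yrow_deriv_eq G z hz x, embCLM_apply,
      Ymat, Xmat, half_bracket]
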